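/- arXiv:1512.02685 — 2 statements merged into one kernel-verified Lean document; each statement's English description precedes it below -/
import Mathlib

section
/- Let q = 2 and n ≥ 1. In the rational function field F_2(t), the identity Σ_{k=0}^{n} (1/D_{n-k})^{2^k} · (1/L_k) = 0 holds. -/
/-- `[m] = t^{2^m} - t ∈ F_2[t]`. -/
noncomputable def br (m : ℕ) : Polynomial (ZMod 2) :=
  Polynomial.X ^ (2 ^ m) - Polynomial.X

/-- The Carlitz factorial `D_n`: `D_0 = 1`, `D_n = [n]·D_{n-1}²`. -/
noncomputable def carlitzD : ℕ → Polynomial (ZMod 2)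
  | 0 => 1
  | n + 1 => br (n + 1) * (carlitzD n) ^ 2

/-- The Carlitz factorial `L_n`: `L_0 = 1`, `L_n = [n]·L_{n-1}`. -/
noncomputable def carlitzL : ℕ → Polynomial (ZMod 2)
  | 0 => 1
  | n + 1 => br (n + 1) * carlitzL n

lemma br_zero : br 0 = 0 := by simp [br]

lemma br_ne_zero (m : ℕ) (hm : 1 ≤ m) : br m ≠ 0 := by
  intro h
  have h2 : (2:ℕ) ≤ 2 ^ m := by
    calc (2:ℕ) = 2 ^ 1 := rfl
    _ ≤ 2 ^ m := Nat.pow_le_pow_right (by norm_num) hm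
  have := congrArg (fun p => Polynomial.coeff p (2 ^ m)) h
  simp only [br, Polynomial.coeff_sub, Polynomial.coeff_X_pow, Polynomial.coeff_X,
    if_pos rfl, if_neg (show ¬(1 = 2 ^ m) by omega), Polynomial.coeff_zero] at this
  norm_num at this

lemma carlitzD_ne_zero (m : ℕ) : carlitzD m ≠ 0 := by
  induction m with
  | zero => simp [carlitzD]
  | succ k ih =>
    simp only [carlitzD]
    exact mul_ne_zero (br_ne_zero _ (by omega)) (pow_ne_zero _ ih)

lemma carlitzL_ne_zero (m : ℕ) : carlitzL m ≠ 0 := by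
  induction m with
  | zero => simp [carlitzL]
  | succ k ih =>
    simp only [carlitzL]
    exact mul_ne_zero (br_ne_zero _ (by omega)) ih

lemma br_split (k n : ℕ) (h : k ≤ n) :
    br n = br k + (br (n - k)) ^ (2 ^ k) := by
  have h2 : (2:ℕ) ^ (n - k) * 2 ^ k = 2 ^ n := by
    rw [← pow_add]; congr 1; omega
  simp only [br]
  rw [sub_pow_char_pow, ← pow_mul, h2]
  ring

/-- (q = 2, n ≥ 1) In `F_2(t)`, `Σ_{k=0}^{n} (1/D_{n-k})^{2^k} · (1/L_k) = 0`. -/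
theorem stmt_6 (n : ℕ) (hn : 1 ≤ n) :
    ∑ k ∈ Finset.range (n + 1),
        (1 / algebraMap (Polynomial (ZMod 2)) (RatFunc (ZMod 2)) (carlitzD (n - k))) ^ (2 ^ k) *
          (1 / algebraMap (Polynomial (ZMod 2)) (RatFunc (ZMod 2)) (carlitzL k)) =
      0 := by
  set φ := algebraMap (Polynomial (ZMod 2)) (RatFunc (ZMod 2)) with hφdef
  haveI : CharP (RatFunc (ZMod 2)) 2 :=
    charP_of_injective_algebraMap (RatFunc.algebraMap_injective (ZMod 2)) 2
  have hbr : ∀ m, 1 ≤ m → φ (br m) ≠ 0 := fun m hm =>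
    RatFunc.algebraMap_ne_zero (br_ne_zero m hm)
  have hD : ∀ m, φ (carlitzD m) ≠ 0 := fun m =>
    RatFunc.algebraMap_ne_zero (carlitzD_ne_zero m)
  have hL : ∀ m, φ (carlitzL m) ≠ 0 := fun m =>
    RatFunc.algebraMap_ne_zero (carlitzL_ne_zero m)
  set B : ℕ → RatFunc (ZMod 2) := fun k =>
    (φ (br (n - k))) ^ (2 ^ k) *
      ((1 / φ (carlitzD (n - k))) ^ (2 ^ k) * (1 / φ (carlitzL k))) with hB
  set A : ℕ → RatFunc (ZMod 2) := fun k =>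
    φ (br k) * ((1 / φ (carlitzD (n - k))) ^ (2 ^ k) * (1 / φ (carlitzL k))) with hA
  have key : φ (br n) * ∑ k ∈ Finset.range (n + 1),
      (1 / φ (carlitzD (n - k))) ^ (2 ^ k) * (1 / φ (carlitzL k)) = 0 := by
    rw [Finset.mul_sum]
    have hterm : ∀ k ∈ Finset.range (n + 1),
        φ (br n) * ((1 / φ (carlitzD (n - k))) ^ (2 ^ k) * (1 / φ (carlitzL k)))
          = A k + B k := by
      intro k hk
      have hk' : k ≤ n := by simpa [Nat.lt_succ_iff] using hk
      rw [br_split k n hk']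
      simp only [map_add, map_pow, hA, hB]
      ring
    rw [Finset.sum_congr rfl hterm, Finset.sum_add_distrib]
    have hA0 : A 0 = 0 := by simp [hA, br_zero]
    have hBn : B n = 0 := by simp [hB, br_zero]
    have hAB : ∀ j, j < n → A (j + 1) = B j := by
      intro j hj
      obtain ⟨m, hm⟩ : ∃ m, n - j = m + 1 := ⟨n - j - 1, by omega⟩
      have hmj : n - (j + 1) = m := by omega
      have hDsplit : carlitzD (n - j) = br (n - j) * (carlitzD m) ^ 2 := by
        rw [hm]; rw [show m + 1 = n - j from hm.symm] -- keep br (n-j)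
        simp only [carlitzD, hm]
      have hbnj : φ (br (n - j)) ≠ 0 := hbr _ (by omega)
      simp only [hA, hB, hmj, carlitzL]
      rw [hDsplit]
      rw [map_mul, map_mul, map_pow]
      have h1 : φ (br (j + 1)) ≠ 0 := hbr _ (by omega)
      have h2 : φ (carlitzD m) ≠ 0 := hD m
      have h3 : φ (carlitzL j) ≠ 0 := hL j
      field_simp
      rw [pow_succ 2 j, pow_mul', ← mul_pow]
      congr 1
      rw [one_div, one_div, mul_inv, inv_pow, mul_left_comm, mul_inv_cancel₀ hbnj, mul_one]
    rw [Finset.sum_range_succ' A, Finset.sum_range_succ B, hA0, hBn, add_zero, add_zero,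
      Finset.sum_congr rfl (fun j hj => hAB j (Finset.mem_range.mp hj))]
    exact CharTwo.add_self_eq_zero _
  rcases mul_eq_zero.mp key with h | h
  · exact absurd h (hbr n hn)
  · exact h
end

section
/- Let q be a power of a prime p, let d ≥ 1, and let k be a positive multiple of q-1. If P_d(k) ≠ 0, then the valuation at infinity p_d(k) of P_d(k) is divisible by q(q-1) and satisfies p_d(k) ≥ kd. -/
/-- `P_d(k) = Σ 1/(1 - ℘^k) ∈ F_q(t)`, the (finite) sum over all monic irreducible
`℘ ∈ F_q[t]` of degree `d`. -/
noncomputable def Pd (Fq : Type*) [Field Fq] (d k : ℕ) : RatFunc Fq :=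
  ∑ᶠ ℘ ∈ {P : Polynomial Fq | P.Monic ∧ Irreducible P ∧ P.natDegree = d},
    (1 - algebraMap (Polynomial Fq) (RatFunc Fq) ℘ ^ k)⁻¹

open Polynomial

noncomputable section StmtAux

variable {Fq : Type*} [Field Fq]

/-- the linear polynomial `c X + a`. -/
def lin (c a : Fq) : Fq[X] := C c * X + C a

lemma lin_comp_lin {c : Fq} (hc : c ≠ 0) (a : Fq) :
    (lin c a).comp (lin c⁻¹ (-(c⁻¹ * a))) = X := by
  simp only [lin, add_comp, mul_comp, C_comp, X_comp, ← C_mul, ← C_neg]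
  rw [mul_add, ← mul_assoc, ← C_mul, mul_inv_cancel₀ hc, C_1, one_mul, ← C_mul]
  rw [mul_neg, ← mul_assoc, mul_inv_cancel₀ hc, one_mul]
  simp

lemma lin_comp_lin' {c : Fq} (hc : c ≠ 0) (a : Fq) :
    (lin c⁻¹ (-(c⁻¹ * a))).comp (lin c a) = X := by
  simp only [lin, add_comp, mul_comp, C_comp, X_comp, ← C_mul, ← C_neg]
  rw [mul_add, ← mul_assoc, ← C_mul, inv_mul_cancel₀ hc, C_1, one_mul, ← C_mul]
  rw [add_assoc, ← C_add]
  have : c⁻¹ * a + -(c⁻¹ * a) = 0 := by ring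
  simp [this]

lemma comp_lin_injective {c : Fq} (hc : c ≠ 0) (a : Fq) :
    Function.Injective (fun p : Fq[X] => p.comp (lin c a)) := by
  intro p q h
  have := congrArg (fun r : Fq[X] => r.comp (lin c⁻¹ (-(c⁻¹ * a)))) h
  simpa [Polynomial.comp_assoc, lin_comp_lin hc a] using this

/-- substitution `t ↦ c t + a` as a ring hom of `RatFunc Fq`. -/
def substHom {c : Fq} (hc : c ≠ 0) (a : Fq) : RatFunc Fq →+* RatFunc Fq :=
  IsFractionRing.lift (g := (algebraMap Fq[X] (RatFunc Fq)).comp (eval₂RingHom C (lin c a)))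
    (by
      apply Function.Injective.comp (IsFractionRing.injective Fq[X] (RatFunc Fq))
      intro p q h
      exact comp_lin_injective hc a h)

lemma substHom_algebraMap {c : Fq} (hc : c ≠ 0) (a : Fq) (p : Fq[X]) :
    substHom hc a (algebraMap Fq[X] (RatFunc Fq) p)
      = algebraMap Fq[X] (RatFunc Fq) (p.comp (lin c a)) := by
  rw [substHom, IsFractionRing.lift_algebraMap]
  rfl

section Trans

lemma comp_lin_ne_zero {c : Fq} (hc : c ≠ 0) (a : Fq) {p : Fq[X]} (hp : p ≠ 0) :
    p.comp (lin c a) ≠ 0 := fun h => hp (comp_lin_injective hc a (h.trans (zero_comp (p := lin c a)).symm))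

lemma natDegree_lin {c : Fq} (hc : c ≠ 0) (a : Fq) : (lin c a).natDegree = 1 :=
  natDegree_linear hc

lemma natDegree_comp_lin {c : Fq} (hc : c ≠ 0) (a : Fq) (p : Fq[X]) :
    (p.comp (lin c a)).natDegree = p.natDegree := by
  rw [natDegree_comp, natDegree_lin hc, mul_one]

lemma degree_comp_lin {c : Fq} (hc : c ≠ 0) (a : Fq) (p : Fq[X]) :
    (p.comp (lin c a)).degree = p.degree := by
  rcases eq_or_ne p 0 with rfl | hp
  · simp
  · rw [degree_eq_natDegree hp, degree_eq_natDegree (comp_lin_ne_zero hc a hp),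
      natDegree_comp_lin hc]

variable [Fintype Fq]

/-- `θ = X^q - X` is invariant under all translations. -/
lemma theta_comp (a : Fq) :
    ((X ^ Fintype.card Fq - X : Fq[X])).comp (lin 1 a) = X ^ Fintype.card Fq - X := by
  have hlin : lin (1:Fq) a = X + C a := by simp [lin]
  haveI := ringChar.charP Fq
  obtain ⟨n, hp, hcard⟩ := FiniteField.card Fq (ringChar Fq)
  haveI : Fact (Nat.Prime (ringChar Fq)) := ⟨hp⟩
  rw [hlin, sub_comp, pow_comp, X_comp, hcard, add_pow_char_pow, ← C_pow, ← hcard,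
    FiniteField.pow_card]
  ring

lemma theta_natDegree : (X ^ Fintype.card Fq - X : Fq[X]).natDegree = Fintype.card Fq := by
  have h2 : 1 < Fintype.card Fq := Fintype.one_lt_card
  rw [natDegree_sub_eq_left_of_natDegree_lt] <;> simp [natDegree_X_pow, h2]

lemma theta_monic : (X ^ Fintype.card Fq - X : Fq[X]).Monic := by
  have h2 : 1 < Fintype.card Fq := Fintype.one_lt_card
  apply monic_X_pow_sub
  rw [degree_X]
  exact_mod_cast h2

lemma trans_natDegree_dvd (g : Fq[X]) (hg : ∀ a : Fq, g.comp (lin 1 a) = g) :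
    Fintype.card Fq ∣ g.natDegree := by
  set q := Fintype.card Fq with hq
  have hq2 : 1 < q := Fintype.one_lt_card
  suffices H : ∀ n (g : Fq[X]), g.natDegree = n → (∀ a : Fq, g.comp (lin 1 a) = g) →
      q ∣ g.natDegree from H _ g rfl hg
  intro n
  induction n using Nat.strong_induction_on with
  | _ n ih =>
  intro g hn hg
  by_cases hlt : g.natDegree < q
  · -- g is constant
    have hconst : g - C (g.eval 0) = 0 := by
      apply Polynomial.eq_zero_of_natDegree_lt_card_of_eval_eq_zero _
        (f := (id : Fq → Fq)) (fun x y h => h)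
      · intro a
        have := congrArg (Polynomial.eval (0 : Fq)) (hg a)
        rw [eval_comp] at this
        simp only [lin, eval_add, eval_mul, eval_C, eval_X, one_mul, mul_zero, zero_add] at this
        simp [this]
      · exact lt_of_le_of_lt (le_trans (natDegree_sub_le _ _) (by simp)) hlt
    have : g = C (g.eval 0) := by linear_combination (norm := ring_nf) hconst
    rw [this, natDegree_C]
    exact dvd_zero _
  · push_neg at hlt
    set θ : Fq[X] := X ^ q - X with hθ
    have hmono : θ.Monic := theta_monic
    have hθdeg : θ.natDegree = q := theta_natDegree
    have hinv : ∀ a : Fq, (g /ₘ θ).comp (lin 1 a) = g /ₘ θ := by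
      intro a
      have key := div_modByMonic_unique (f := g) (g := θ)
        ((g /ₘ θ).comp (lin 1 a)) ((g %ₘ θ).comp (lin 1 a)) hmono
        ⟨by
          have h1 := congrArg (fun r : Fq[X] => r.comp (lin 1 a)) (modByMonic_add_div g θ)
          simp only [add_comp, mul_comp] at h1
          rw [show θ.comp (lin 1 a) = θ from theta_comp a] at h1
          exact h1.trans (hg a), by
          rw [degree_comp_lin one_ne_zero]
          exact degree_modByMonic_lt g hmono⟩
      exact key.1.symm
    have hdvd1 : q ∣ (g /ₘ θ).natDegree :=
      ih (g /ₘ θ).natDegree (by rw [natDegree_divByMonic g hmono, hθdeg]; omega) _ rfl hinv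
    rw [natDegree_divByMonic g hmono, hθdeg] at hdvd1
    obtain ⟨m, hm⟩ := hdvd1
    refine ⟨m + 1, ?_⟩
    rw [Nat.mul_add, mul_one, ← hm]
    omega

end Trans
end StmtAux

section Scale

variable {Fq : Type*} [Field Fq]

lemma coeff_comp_C_mul_X (p : Fq[X]) (c : Fq) (n : ℕ) :
    (p.comp (C c * X)).coeff n = c ^ n * p.coeff n := by
  induction p using Polynomial.induction_on' with
  | add p q hp hq => simp [add_comp, hp, hq, mul_add]
  | monomial m a =>
      rw [monomial_comp, mul_pow, ← C_pow, ← mul_assoc, ← C_mul]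
      rw [coeff_C_mul, coeff_X_pow, coeff_monomial]
      by_cases h : m = n
      · simp [h, mul_comm]
      · rw [if_neg (fun hn => h hn.symm), if_neg h]
        simp

/-- the substitution ring-equivalence of the polynomial ring. -/
noncomputable def compEquiv {c : Fq} (hc : c ≠ 0) (a : Fq) : Fq[X] ≃+* Fq[X] :=
  RingEquiv.ofRingHom (eval₂RingHom C (lin c a)) (eval₂RingHom C (lin c⁻¹ (-(c⁻¹ * a))))
    (RingHom.ext fun p => by
      show (p.comp (lin c⁻¹ (-(c⁻¹ * a)))).comp (lin c a) = p
      rw [Polynomial.comp_assoc, lin_comp_lin' hc a, comp_X])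
    (RingHom.ext fun p => by
      show (p.comp (lin c a)).comp (lin c⁻¹ (-(c⁻¹ * a))) = p
      rw [Polynomial.comp_assoc, lin_comp_lin hc a, comp_X])

lemma irreducible_comp_lin {c : Fq} (hc : c ≠ 0) (a : Fq) {p : Fq[X]} (hp : Irreducible p) :
    Irreducible (p.comp (lin c a)) :=
  hp.map (compEquiv hc a)

end Scale

noncomputable def Pd' (Fq : Type*) [Field Fq] (d k : ℕ) : RatFunc Fq :=
  ∑ᶠ ℘ ∈ {P : Polynomial Fq | P.Monic ∧ Irreducible P ∧ P.natDegree = d},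
    (1 - algebraMap (Polynomial Fq) (RatFunc Fq) ℘ ^ k)⁻¹

section Main

variable {Fq : Type*} [Field Fq] [Fintype Fq]

lemma S_finite (d : ℕ) : {P : Fq[X] | P.Monic ∧ Irreducible P ∧ P.natDegree = d}.Finite := by
  apply Set.Finite.subset (Set.finite_range
    (fun f : Fin (d + 1) → Fq => ∑ i : Fin (d + 1), C (f i) * X ^ (i : ℕ)))
  intro p hp
  refine ⟨fun i => p.coeff i, ?_⟩
  have h1 : p = ∑ i : Fin (d + 1), (monomial (i : ℕ)) (p.coeff i) := by
    rw [← Finset.sum_range (fun i => (monomial i) (p.coeff i))]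
    exact p.as_sum_range' (d + 1) (by rw [hp.2.2]; omega)
  conv_rhs => rw [h1]
  simp [C_mul_X_pow_eq_monomial]

variable (Fq) in
lemma Pd'_eq (d k : ℕ) :
    Pd' Fq d k = ∑ p ∈ (S_finite (Fq := Fq) d).toFinset,
      (1 - algebraMap Fq[X] (RatFunc Fq) p ^ k)⁻¹ :=
  finsum_mem_eq_finite_toFinset_sum _ (S_finite d)

lemma mem_S_comp {c : Fq} (hc : c ≠ 0) (a : Fq) {d : ℕ} {p : Fq[X]}
    (hp : p.Monic ∧ Irreducible p ∧ p.natDegree = d) :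
    (C (c ^ d)⁻¹ * p.comp (lin c a)).Monic ∧ Irreducible (C (c ^ d)⁻¹ * p.comp (lin c a)) ∧
      (C (c ^ d)⁻¹ * p.comp (lin c a)).natDegree = d := by
  obtain ⟨hm, hirr, hdeg⟩ := hp
  have hu : ((c ^ d)⁻¹ : Fq) ≠ 0 := inv_ne_zero (pow_ne_zero d hc)
  have hlc : (p.comp (lin c a)).leadingCoeff = c ^ d := by
    rw [leadingCoeff_comp (by rw [natDegree_lin hc]; exact one_ne_zero), hm.leadingCoeff,
      one_mul, lin, leadingCoeff_linear hc, hdeg]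
  refine ⟨?_, ?_, ?_⟩
  · show leadingCoeff _ = 1
    rw [leadingCoeff_mul, leadingCoeff_C, hlc, inv_mul_cancel₀ (pow_ne_zero d hc)]
  · exact (associated_unit_mul_right _ _ (isUnit_C.mpr (isUnit_iff_ne_zero.mpr hu))).irreducible
      (irreducible_comp_lin hc a hirr)
  · rw [natDegree_C_mul hu, natDegree_comp_lin hc, hdeg]

lemma e_inv {c : Fq} (hc : c ≠ 0) (a : Fq) (d : ℕ) (p : Fq[X]) :
    C ((c⁻¹) ^ d)⁻¹ * (C (c ^ d)⁻¹ * p.comp (lin c a)).comp (lin c⁻¹ (-(c⁻¹ * a))) = p := by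
  rw [mul_comp, C_comp, Polynomial.comp_assoc, lin_comp_lin hc a, comp_X, ← mul_assoc, ← C_mul,
    inv_pow, inv_inv, mul_inv_cancel₀ (pow_ne_zero d hc), C_1, one_mul]

lemma e_inv' {c : Fq} (hc : c ≠ 0) (a : Fq) (d : ℕ) (p : Fq[X]) :
    C (c ^ d)⁻¹ * (C ((c⁻¹) ^ d)⁻¹ * p.comp (lin c⁻¹ (-(c⁻¹ * a)))).comp (lin c a) = p := by
  rw [mul_comp, C_comp, Polynomial.comp_assoc, lin_comp_lin' hc a, comp_X, ← mul_assoc, ← C_mul,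
    inv_pow, inv_inv, inv_mul_cancel₀ (pow_ne_zero d hc), C_1, one_mul]

lemma substHom_Pd {c : Fq} (hc : c ≠ 0) (a : Fq) {d k : ℕ}
    (hdvd : Fintype.card Fq - 1 ∣ k) :
    substHom hc a (Pd' Fq d k) = Pd' Fq d k := by
  classical
  rw [Pd'_eq, map_sum]
  have hpow : ∀ p : Fq[X], p.natDegree = d →
      (p.comp (lin c a)) ^ k = (C (c ^ d)⁻¹ * p.comp (lin c a)) ^ k := by
    intro p hpd
    rw [mul_pow, ← C_pow, inv_pow, ← pow_mul]
    have hck : c ^ (d * k) = 1 := by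
      obtain ⟨m, rfl⟩ := hdvd
      rw [show d * ((Fintype.card Fq - 1) * m) = (Fintype.card Fq - 1) * (m * d) by ring, pow_mul,
        FiniteField.pow_card_sub_one_eq_one c hc, one_pow]
    rw [hck, inv_one, C_1, one_mul]
  refine Finset.sum_bij' (fun p _ => C (c ^ d)⁻¹ * p.comp (lin c a))
    (fun p _ => C ((c⁻¹) ^ d)⁻¹ * p.comp (lin c⁻¹ (-(c⁻¹ * a)))) ?_ ?_ ?_ ?_ ?_
  · intro p hp
    rw [Set.Finite.mem_toFinset] at *
    exact mem_S_comp hc a hp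
  · intro p hp
    rw [Set.Finite.mem_toFinset] at *
    exact mem_S_comp (inv_ne_zero hc) (-(c⁻¹ * a)) hp
  · intro p hp
    exact e_inv hc a d p
  · intro p hp
    exact e_inv' hc a d p
  · intro p hp
    rw [Set.Finite.mem_toFinset] at hp
    rw [map_inv₀, map_sub, map_one, map_pow, substHom_algebraMap, ← map_pow, ← map_pow,
      hpow p hp.2.2]

end Main

section Main2

variable {Fq : Type*} [Field Fq]

lemma exists_unit {c : Fq} (hc : c ≠ 0) (a : Fq) {x : RatFunc Fq} (hx : x ≠ 0)
    (hinv : substHom hc a x = x) :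
    ∃ e : Fq, e ≠ 0 ∧ x.num.comp (lin c a) = C e * x.num ∧
      x.denom.comp (lin c a) = C e * x.denom := by
  set N := x.num with hNdef
  set D := x.denom with hDdef
  have hN : N ≠ 0 := RatFunc.num_ne_zero hx
  have hD : D ≠ 0 := x.denom_ne_zero
  have hcross : N.comp (lin c a) * D = N * D.comp (lin c a) := by
    have h1 : substHom hc a x = algebraMap Fq[X] (RatFunc Fq) (N.comp (lin c a)) /
        algebraMap Fq[X] (RatFunc Fq) (D.comp (lin c a)) := by
      conv_lhs => rw [← RatFunc.num_div_denom x]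
      rw [map_div₀, substHom_algebraMap, substHom_algebraMap]
    rw [hinv] at h1
    rw [← RatFunc.num_div_denom x, div_eq_div_iff (RatFunc.algebraMap_ne_zero hD)
      (RatFunc.algebraMap_ne_zero (comp_lin_ne_zero hc a hD))] at h1
    rw [← map_mul, ← map_mul] at h1
    have h2 := IsFractionRing.injective Fq[X] (RatFunc Fq) h1
    linear_combination -h2
  have hcop : IsCoprime N D := x.isCoprime_num_denom
  have hcopl : IsCoprime (N.comp (lin c a)) (D.comp (lin c a)) := by
    obtain ⟨u, v, huv⟩ := hcop
    refine ⟨u.comp (lin c a), v.comp (lin c a), ?_⟩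
    have h3 := congrArg (fun r : Fq[X] => r.comp (lin c a)) huv
    simpa [add_comp, mul_comp] using h3
  have hdN : N.comp (lin c a) ∣ N := hcopl.dvd_of_dvd_mul_right ⟨D, hcross.symm⟩
  have hdD : D.comp (lin c a) ∣ D := hcopl.symm.dvd_of_dvd_mul_right
    ⟨N, by linear_combination hcross⟩
  have key : ∀ P : Fq[X], P ≠ 0 → P.comp (lin c a) ∣ P →
      ∃ w : Fq, w ≠ 0 ∧ P.comp (lin c a) = C w * P := by
    intro P hP hdvd
    obtain ⟨w, hw⟩ := hdvd
    have hw0 : w ≠ 0 := by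
      rintro rfl
      rw [mul_zero] at hw
      exact hP hw
    have hdegw : w.natDegree = 0 := by
      have h4 := congrArg natDegree hw
      rw [natDegree_mul (comp_lin_ne_zero hc a hP) hw0, natDegree_comp_lin hc] at h4
      omega
    have hwC : w = C (w.coeff 0) := eq_C_of_natDegree_eq_zero hdegw
    have hw00 : w.coeff 0 ≠ 0 := fun h5 => hw0 (by rw [hwC, h5, C_0])
    refine ⟨(w.coeff 0)⁻¹, inv_ne_zero hw00, ?_⟩
    rw [hwC] at hw
    conv_rhs => rw [hw]
    rw [mul_comm (P.comp (lin c a)) (C (w.coeff 0)), ← mul_assoc, ← C_mul,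
      inv_mul_cancel₀ hw00, C_1, one_mul]
  obtain ⟨eN, heN0, heN⟩ := key N hN hdN
  obtain ⟨eD, heD0, heD⟩ := key D hD hdD
  have heq : eN = eD := by
    have h3 := hcross
    rw [heN, heD] at h3
    have h4 : C eN * (N * D) = C eD * (N * D) := by linear_combination h3
    exact C_inj.mp (mul_right_cancel₀ (mul_ne_zero hN hD) h4)
  exact ⟨eN, heN0, heN, heq ▸ heD⟩

lemma intDegree_inv (x : RatFunc Fq) : (x⁻¹).intDegree = -x.intDegree := by
  rcases eq_or_ne x 0 with rfl | hx
  · simp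
  · have h := RatFunc.intDegree_mul hx (inv_ne_zero hx)
    rw [mul_inv_cancel₀ hx, RatFunc.intDegree_one] at h
    linarith

lemma intDegree_term {p : Fq[X]} (hp : 1 ≤ p.natDegree) {k : ℕ} (hk : 0 < k) :
    (1 - algebraMap Fq[X] (RatFunc Fq) p ^ k)⁻¹ ≠ 0 ∧
    ((1 - algebraMap Fq[X] (RatFunc Fq) p ^ k)⁻¹).intDegree = -(k * p.natDegree : ℕ) := by
  have hdeg : ((1 : Fq[X]) - p ^ k).natDegree = k * p.natDegree := by
    rw [show (1 : Fq[X]) - p ^ k = -(p ^ k - C 1) by rw [C_1]; ring, natDegree_neg, natDegree_sub_C,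
      natDegree_pow]
  have hne : (1 : Fq[X]) - p ^ k ≠ 0 := by
    intro h
    rw [h, natDegree_zero] at hdeg
    have : 1 ≤ k * p.natDegree := Nat.one_le_iff_ne_zero.mpr (by positivity)
    omega
  have halg : (1 : RatFunc Fq) - algebraMap Fq[X] (RatFunc Fq) p ^ k
      = algebraMap Fq[X] (RatFunc Fq) (1 - p ^ k) := by
    rw [map_sub, map_one, map_pow]
  rw [halg]
  refine ⟨inv_ne_zero (RatFunc.algebraMap_ne_zero hne), ?_⟩
  rw [intDegree_inv, RatFunc.intDegree_polynomial, hdeg]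

lemma intDegree_sum_le {ι : Type*} (s : Finset ι) (f : ι → RatFunc Fq) (B : ℤ)
    (hf : ∀ i ∈ s, f i ≠ 0 ∧ (f i).intDegree ≤ B) (h0 : ∑ i ∈ s, f i ≠ 0) :
    (∑ i ∈ s, f i).intDegree ≤ B := by
  classical
  revert hf h0
  induction s using Finset.induction_on with
  | empty => intro _ h0; simp at h0
  | @insert a s ha ih =>
    intro hf h0
    rw [Finset.sum_insert ha] at h0 ⊢
    by_cases hrest : ∑ i ∈ s, f i = 0
    · rw [hrest, add_zero]
      exact (hf _ (Finset.mem_insert_self _ _)).2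
    · refine le_trans (RatFunc.intDegree_add_le hrest h0) ?_
      exact max_le (hf _ (Finset.mem_insert_self _ _)).2
        (ih (fun i hi => hf i (Finset.mem_insert_of_mem hi)) hrest)

end Main2


/-- For `d ≥ 1` and `k` a positive multiple of `q - 1`, if `P_d(k) ≠ 0` then its valuation
at infinity `p_d(k) = -intDegree (P_d(k))` is divisible by `q(q-1)` and is at least `kd`. -/
theorem stmt_9 (Fq : Type*) [Field Fq] [Fintype Fq] (d k : ℕ) (hd : 1 ≤ d) (hk : 0 < k)
    (hdvd : Fintype.card Fq - 1 ∣ k) (h0 : Pd Fq d k ≠ 0) :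
    ((Fintype.card Fq * (Fintype.card Fq - 1) : ℕ) : ℤ) ∣ -(Pd Fq d k).intDegree ∧
    ((k * d : ℕ) : ℤ) ≤ -(Pd Fq d k).intDegree := by
  classical
  have hq2 : 1 < Fintype.card Fq := Fintype.one_lt_card
  set q := Fintype.card Fq with hq
  have hPd' : Pd Fq d k = Pd' Fq d k := rfl
  rw [hPd'] at h0 ⊢
  set x := Pd' Fq d k with hxdef
  -- translation invariance
  have hstep : ∀ a : Fq, x.num.comp (lin 1 a) = x.num ∧ x.denom.comp (lin 1 a) = x.denom := by
    intro a
    obtain ⟨e, he0, heN, heD⟩ := exists_unit one_ne_zero a h0 (substHom_Pd one_ne_zero a hdvd)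
    have he1 : e = 1 := by
      have h1 := congrArg leadingCoeff heD
      rw [leadingCoeff_mul, leadingCoeff_C,
        leadingCoeff_comp (by rw [natDegree_lin one_ne_zero]; exact one_ne_zero),
        (RatFunc.monic_denom x).leadingCoeff, lin, leadingCoeff_linear one_ne_zero,
        one_pow, one_mul, mul_one] at h1
      exact h1.symm
    rw [he1, C_1, one_mul] at heN heD
    exact ⟨heN, heD⟩
  have hNq : q ∣ x.num.natDegree := trans_natDegree_dvd _ (fun a => (hstep a).1)
  have hDq : q ∣ x.denom.natDegree := trans_natDegree_dvd _ (fun a => (hstep a).2)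
  -- scaling invariance
  obtain ⟨ζ, hζ⟩ := IsCyclic.exists_generator (α := Fqˣ)
  have hζord : orderOf ζ = q - 1 := by
    rw [orderOf_eq_card_of_forall_mem_zpowers hζ, Nat.card_eq_fintype_card, Fintype.card_units]
  have hc : (ζ : Fq) ≠ 0 := ζ.ne_zero
  obtain ⟨e, he0, heN, heD⟩ := exists_unit hc 0 h0 (substHom_Pd hc 0 hdvd)
  have hlin0 : lin (ζ : Fq) (0 : Fq) = C (ζ : Fq) * X := by simp [lin]
  rw [hlin0] at heN heD
  have hpow : ∀ P : Fq[X], P ≠ 0 → P.comp (C (ζ : Fq) * X) = C e * P →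
      (ζ : Fq) ^ P.natDegree = e := by
    intro P hP hPe
    have h1 := congrArg (fun r : Fq[X] => r.coeff P.natDegree) hPe
    simp only [coeff_comp_C_mul_X, coeff_C_mul] at h1
    have hlcP : P.coeff P.natDegree ≠ 0 := by
      rw [coeff_natDegree]
      exact leadingCoeff_ne_zero.mpr hP
    exact mul_right_cancel₀ hlcP h1
  have hpN := hpow _ (RatFunc.num_ne_zero h0) heN
  have hpD := hpow _ x.denom_ne_zero heD
  have hun : ζ ^ x.num.natDegree = ζ ^ x.denom.natDegree := by
    ext
    rw [Units.val_pow_eq_pow_val, Units.val_pow_eq_pow_val, hpN, hpD]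
  have hq1dvd : ((q - 1 : ℕ) : ℤ) ∣ ((x.num.natDegree : ℤ) - x.denom.natDegree) := by
    rw [← hζord]
    rw [orderOf_dvd_iff_zpow_eq_one, zpow_sub, zpow_natCast, zpow_natCast, hun,
      mul_inv_cancel]
  have hint : x.intDegree = (x.num.natDegree : ℤ) - x.denom.natDegree := rfl
  constructor
  · have hqA : (q : ℤ) ∣ x.intDegree := by
      rw [hint]
      exact dvd_sub (Int.natCast_dvd_natCast.mpr hNq) (Int.natCast_dvd_natCast.mpr hDq)
    have hqB : ((q - 1 : ℕ) : ℤ) ∣ x.intDegree := hint ▸ hq1dvd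
    have hqcop : Nat.Coprime q (q - 1) := by
      have h := Nat.dvd_sub (Nat.gcd_dvd_left q (q - 1)) (Nat.gcd_dvd_right q (q - 1))
      rw [show q - (q - 1) = 1 by omega] at h
      exact Nat.dvd_one.mp h
    have hcopZ : IsCoprime (q : ℤ) ((q - 1 : ℕ) : ℤ) := by
      rw [Int.isCoprime_iff_gcd_eq_one, Int.gcd_natCast_natCast]
      exact hqcop
    have hmul := hcopZ.mul_dvd hqA hqB
    rw [Nat.cast_mul]
    exact dvd_neg.mpr hmul
  · have hsum : x = ∑ p ∈ (S_finite (Fq := Fq) d).toFinset,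
        (1 - algebraMap Fq[X] (RatFunc Fq) p ^ k)⁻¹ := Pd'_eq Fq d k
    have hle : x.intDegree ≤ -(k * d : ℕ) := by
      rw [hsum]
      apply intDegree_sum_le _ _ _ ?_ (hsum ▸ h0)
      intro p hp
      rw [Set.Finite.mem_toFinset] at hp
      have hterm := intDegree_term (p := p) (by rw [hp.2.2]; exact hd) hk
      exact ⟨hterm.1, by rw [hterm.2, hp.2.2]⟩
    omega
end
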